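/- Let f_1,…,f_k : {0,1} → ℝ≥0 and let g : {0,1}^k → ℝ≥0 be log-supermodular with g(x^1,…,x^k) ≤ ∏_{i=1}^k f_i(z^i(x^1,…,x^k)) for all x^1,…,x^k ∈ {0,1}, and set f(x) = ∏_{i=1}^k f_i(x_i) for x ∈ {0,1}^k. Fix c ∈ {0,…,k}, let V^c = { v ∈ {0,1}^k : v_1 + ⋯ + v_k = c }, and fix T with 1 ≤ T ≤ |V^c|. Then for any T pairwise distinct vectors v^1,…,v^T ∈ V^c there exist T pairwise distinct vectors u^1,…,u^T ∈ V^c such that ∏_{t=1}^T g(v^t) ≤ ∏_{t=1}^T f(u^t). Equivalently, the maximum of ∏_{v∈S} g(v) over T-element subsets S of V^c is at most the maximum of ∏_{v∈S} f(v) over T-element subsets S of V^c. -/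

import Mathlib

open scoped NNReal

/-- `zscal x i` is the `(i+1)`-st largest (1-indexed) among the scalars `x 0, …, x (k-1)`;
i.e. it is `true` iff at least `i+1` of these values are `true`. -/
def zscal {k : ℕ} (x : Fin k → Bool) (i : Fin k) : Bool :=
  decide ((i : ℕ) + 1 ≤ (Finset.univ.filter (fun a : Fin k => x a = true)).card)

namespace LayerAux

variable {k : ℕ}

/-- Number of `true` coordinates of a vector. -/
def wt (v : Fin k → Bool) : ℕ := (Finset.univ.filter (fun i => v i = true)).card

/-- Column count of a multiset of vectors at coordinate `i`. -/
def colCount (M : Multiset (Fin k → Bool)) (i : Fin k) : ℕ :=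
  Multiset.countP (fun v => v i = true) M

/-- The `t`-th (0-indexed) componentwise order statistic of a multiset of vectors. -/
def chi (M : Multiset (Fin k → Bool)) (t : ℕ) : Fin k → Bool :=
  fun i => decide (t + 1 ≤ colCount M i)

lemma wt_eq_sum (v : Fin k → Bool) : wt v = ∑ i : Fin k, (if v i = true then 1 else 0) := by
  rw [wt, Finset.card_filter]

lemma wt_inf_add_wt_sup (x y : Fin k → Bool) :
    wt (x ⊓ y) + wt (x ⊔ y) = wt x + wt y := by
  simp only [wt_eq_sum, ← Finset.sum_add_distrib]
  refine Finset.sum_congr rfl fun i _ => ?_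
  simp only [Pi.inf_apply, Pi.sup_apply]
  rcases Bool.dichotomy (x i) with hx | hx <;> rcases Bool.dichotomy (y i) with hy | hy <;>
    simp [hx, hy]

lemma wt_le (v : Fin k → Bool) : wt v ≤ k := by
  simpa [wt] using Finset.card_filter_le Finset.univ (fun i => v i = true)

lemma wt_lt_of_lt {x y : Fin k → Bool} (hxy : x ≤ y) (hne : x ≠ y) : wt x < wt y := by
  apply Finset.card_lt_card
  constructor
  · intro i hi
    simp only [Finset.mem_filter, Finset.mem_univ, true_and] at hi ⊢
    have := hxy i
    rw [hi] at this
    exact Bool.eq_true_of_true_le this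
  · intro hsub
    apply hne
    funext i
    have h1 := hxy i
    by_contra hne2
    cases hxi : x i <;> cases hyi : y i <;> simp [hxi, hyi] at hne2 ⊢
    · have : i ∈ Finset.univ.filter (fun j => y j = true) := by simp [hyi]
      have := hsub this
      simp [hxi] at this
    · rw [hxi, hyi] at h1; exact absurd h1 (by simp)

lemma exists_max (M : Multiset (Fin k → Bool)) (h0 : M ≠ 0)
    (hcomp : ∀ x ∈ M, ∀ y ∈ M, x ≤ y ∨ y ≤ x) :
    ∃ m ∈ M, ∀ y ∈ M, y ≤ m := by
  induction M using Multiset.induction_on with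
  | empty => exact absurd rfl h0
  | cons a M ih =>
    rcases eq_or_ne M 0 with rfl | hM0
    · exact ⟨a, by simp, by simp⟩
    · obtain ⟨m, hm, hmax⟩ := ih hM0 (fun x hx y hy =>
        hcomp x (Multiset.mem_cons_of_mem hx) y (Multiset.mem_cons_of_mem hy))
      rcases hcomp a (Multiset.mem_cons_self a M) m (Multiset.mem_cons_of_mem hm) with h | h
      · refine ⟨m, Multiset.mem_cons_of_mem hm, fun y hy => ?_⟩
        rcases Multiset.mem_cons.1 hy with rfl | hy
        · exact h
        · exact hmax y hy
      · refine ⟨a, Multiset.mem_cons_self a M, fun y hy => ?_⟩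
        rcases Multiset.mem_cons.1 hy with rfl | hy
        · exact le_rfl
        · exact (hmax y hy).trans h

lemma chain_eq (G : (Fin k → Bool) → ℝ≥0) :
    ∀ n (M : Multiset (Fin k → Bool)), M.card = n →
    (∀ x ∈ M, ∀ y ∈ M, x ≤ y ∨ y ≤ x) →
    (M.map G).prod = ∏ t ∈ Finset.range n, G (chi M t) := by
  intro n
  induction n with
  | zero =>
    intro M hcard _
    rw [Multiset.card_eq_zero] at hcard
    subst hcard; simp
  | succ n ih =>
    intro M hcard hcomp
    have h0 : M ≠ 0 := by
      intro h; rw [h] at hcard; simp at hcard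
    obtain ⟨m, hm, hmax⟩ := exists_max M h0 hcomp
    set M' := M.erase m with hM'def
    have hMeq : M = m ::ₘ M' := (Multiset.cons_erase hm).symm
    have hcard' : M'.card = n := by
      have := congrArg Multiset.card hMeq
      simp at this; omega
    have hcol : ∀ i, colCount M i = colCount M' i + (if m i = true then 1 else 0) := by
      intro i
      rw [hMeq, colCount, Multiset.countP_cons, colCount]
    have hcol0 : ∀ i, m i = false → colCount M i = 0 := by
      intro i hmi
      rw [colCount, Multiset.countP_eq_zero]
      intro v hv hvi
      have := hmax v hv i
      rw [hvi, hmi] at this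
      exact absurd this (by simp)
    have hchi0 : chi M 0 = m := by
      funext i
      rcases Bool.dichotomy (m i) with hmi | hmi
      · simp [chi, hcol0 i hmi, hmi]
      · have h2 := hcol i
        rw [hmi] at h2; simp at h2
        have : 1 ≤ colCount M i := by omega
        simp [chi, this, hmi]
    have hchiS : ∀ t, chi M' t = chi M (t + 1) := by
      intro t
      funext i
      rcases Bool.dichotomy (m i) with hmi | hmi
      · have h1 := hcol0 i hmi
        have h2 : colCount M' i = 0 := by
          have := hcol i; rw [hmi] at this; omega
        simp [chi, h1, h2]
      · have h2 := hcol i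
        rw [hmi] at h2; simp at h2
        simp only [chi]
        rw [decide_eq_decide]
        omega
    have hprod : (M.map G).prod = G m * (M'.map G).prod := by
      conv_lhs => rw [hMeq]
      rw [Multiset.map_cons, Multiset.prod_cons]
    have hmemM : ∀ x ∈ M', x ∈ M := fun x hx => hMeq ▸ Multiset.mem_cons_of_mem hx
    rw [hprod, ih M' hcard' (fun x hx y hy => hcomp x (hmemM x hx) y (hmemM y hy))]
    rw [Finset.prod_range_succ', hchi0, mul_comm]
    congr 1
    exact Finset.prod_congr rfl fun t _ => by rw [hchiS t]

lemma quad {a b p q : ℕ} (h : a + b = p + q) (hp : p < b) (hq : q < b) :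
    p * p + q * q < a * a + b * b := by
  zify at *
  nlinarith [mul_pos (sub_pos.2 hp) (sub_pos.2 hq)]

/-- Sum of squares of weights: the potential function for compression. -/
def sumsq (M : Multiset (Fin k → Bool)) : ℕ := (M.map (fun v => wt v * wt v)).sum

lemma sumsq_le (M : Multiset (Fin k → Bool)) : sumsq M ≤ M.card * (k * k) := by
  rw [sumsq]
  calc (M.map (fun v => wt v * wt v)).sum
      ≤ (M.map (fun v => wt v * wt v)).card • (k * k) := by
        apply Multiset.sum_le_card_nsmul
        intro x hx
        obtain ⟨v, _, rfl⟩ := Multiset.mem_map.1 hx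
        exact Nat.mul_le_mul (wt_le v) (wt_le v)
    _ = M.card * (k * k) := by simp [Multiset.card_map]

lemma compress (g : (Fin k → Bool) → ℝ≥0)
    (hg : ∀ x y : Fin k → Bool, g x * g y ≤ g (x ⊓ y) * g (x ⊔ y)) :
    ∀ n (M : Multiset (Fin k → Bool)), M.card * (k * k) + 1 ≤ n + sumsq M →
    (M.map g).prod ≤ ∏ t ∈ Finset.range M.card, g (chi M t) := by
  intro n
  induction n with
  | zero =>
    intro M hb
    have := sumsq_le M
    omega
  | succ n ih =>
    intro M hb
    by_cases hcomp : ∀ x ∈ M, ∀ y ∈ M, x ≤ y ∨ y ≤ x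
    · exact le_of_eq (chain_eq g M.card M rfl hcomp)
    · push_neg at hcomp
      obtain ⟨x, hx, y, hy, hxy, hyx⟩ := hcomp
      have hne : x ≠ y := fun h => hxy (h ▸ le_rfl)
      have hyx' : y ∈ M.erase x := (Multiset.mem_erase_of_ne hne.symm).2 hy
      set R := (M.erase x).erase y with hR
      have hMeq : M = x ::ₘ y ::ₘ R := by
        rw [hR, Multiset.cons_erase hyx', Multiset.cons_erase hx]
      set M' := (x ⊓ y) ::ₘ (x ⊔ y) ::ₘ R with hM'
      have hcard : M'.card = M.card := by rw [hMeq, hM']; simp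
      have hcol : ∀ i, colCount M' i = colCount M i := by
        intro i
        rw [hMeq, hM', colCount, colCount]
        rw [Multiset.countP_cons, Multiset.countP_cons, Multiset.countP_cons,
          Multiset.countP_cons]
        simp only [Pi.inf_apply, Pi.sup_apply]
        rcases Bool.dichotomy (x i) with hxi | hxi <;>
          rcases Bool.dichotomy (y i) with hyi | hyi <;> simp [hxi, hyi]
      have hchi : ∀ t, chi M' t = chi M t := by
        intro t; funext i; simp only [chi, hcol i]
      have hxle : x ≤ x ⊔ y := le_sup_left
      have hyle : y ≤ x ⊔ y := le_sup_right
      have hxne : x ≠ x ⊔ y := fun h => hyx (h ▸ hyle)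
      have hyne : y ≠ x ⊔ y := fun h => hxy (h ▸ hxle)
      have hlt1 : wt x < wt (x ⊔ y) := wt_lt_of_lt hxle hxne
      have hlt2 : wt y < wt (x ⊔ y) := wt_lt_of_lt hyle hyne
      have hquad : wt x * wt x + wt y * wt y <
          wt (x ⊓ y) * wt (x ⊓ y) + wt (x ⊔ y) * wt (x ⊔ y) :=
        quad (wt_inf_add_wt_sup x y) hlt1 hlt2
      have hsum : sumsq M + 1 ≤ sumsq M' := by
        rw [hMeq, hM', sumsq, sumsq]
        simp only [Multiset.map_cons, Multiset.sum_cons]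
        omega
      have hb' : M'.card * (k * k) + 1 ≤ n + sumsq M' := by
        rw [hcard]; omega
      have hprod : (M.map g).prod ≤ (M'.map g).prod := by
        rw [hMeq, hM']
        simp only [Multiset.map_cons, Multiset.prod_cons, ← mul_assoc]
        exact mul_le_mul_left (hg x y) _
      calc (M.map g).prod ≤ (M'.map g).prod := hprod
        _ ≤ ∏ t ∈ Finset.range M'.card, g (chi M' t) := ih M' hb'
        _ = ∏ t ∈ Finset.range M.card, g (chi M t) := by
            rw [hcard]
            exact Finset.prod_congr rfl fun t _ => by rw [hchi t]

lemma card_filter_perm (σ : Equiv.Perm (Fin k)) (p : Fin k → Prop) [DecidablePred p] :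
    (Finset.univ.filter (fun i => p (σ i))).card = (Finset.univ.filter p).card := by
  apply Finset.card_bij' (fun a _ => σ a) (fun b _ => σ.symm b)
  · intro a ha; simp only [Finset.mem_filter, Finset.mem_univ, true_and] at ha ⊢; exact ha
  · intro b hb; simp only [Finset.mem_filter, Finset.mem_univ, true_and] at hb ⊢; simpa using hb
  · intro a _; simp
  · intro b _; simp

lemma antitone_count (d : Fin k → ℕ) (hd : Antitone d) (i : Fin k) (m : ℕ) :
    ((i : ℕ) + 1 ≤ (Finset.univ.filter (fun i' => m ≤ d i')).card) ↔ m ≤ d i := by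
  constructor
  · intro h
    by_contra hdm
    push_neg at hdm
    have hsub : Finset.univ.filter (fun i' => m ≤ d i') ⊆ Finset.Iio i := by
      intro i' hi'
      simp only [Finset.mem_filter, Finset.mem_univ, true_and] at hi'
      simp only [Finset.mem_Iio]
      by_contra hle
      push_neg at hle
      exact absurd (le_trans hi' (hd hle)) (by omega)
    have := Finset.card_le_card hsub
    rw [Fin.card_Iio] at this
    omega
  · intro h
    have hsub : Finset.Iic i ⊆ Finset.univ.filter (fun i' => m ≤ d i') := by
      intro i' hi'
      simp only [Finset.mem_Iic] at hi'
      simp only [Finset.mem_filter, Finset.mem_univ, true_and]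
      exact le_trans h (hd hi')
    have := Finset.card_le_card hsub
    rw [Fin.card_Iic] at this
    omega

lemma prod_count {α : Type*} (h : Bool → ℝ≥0) (s : Finset α) (p : α → Bool) :
    ∏ a ∈ s, h (p a) =
      h true ^ (s.filter (fun a => p a = true)).card *
        h false ^ (s.filter (fun a => ¬(p a = true))).card := by
  rw [← Finset.prod_filter_mul_prod_filter_not s (fun a => p a = true)]
  congr 1
  · rw [← Finset.prod_const]
    apply Finset.prod_congr rfl
    intro a ha
    simp only [Finset.mem_filter] at ha
    rw [ha.2]
  · rw [← Finset.prod_const]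
    apply Finset.prod_congr rfl
    intro a ha
    simp only [Finset.mem_filter] at ha
    rw [Bool.not_eq_true] at ha
    rw [ha.2]

end LayerAux

open LayerAux in
/-- The key step in Lemma 5 of the paper: with `g : {0,1}ᵏ → ℝ≥0` log-supermodular,
`g ≤ ∏ᵢ fᵢ ∘ zⁱ`, and `f(x) = ∏ᵢ fᵢ(xᵢ)`, for every `c ∈ {0,…,k}` and every `T`-element
set `S` of vectors in the layer `V^c = {v : v₁+⋯+v_k = c}` (with `1 ≤ T ≤ |V^c|`) there is a
`T`-element subset `S'` of `V^c` with `∏_{v∈S} g(v) ≤ ∏_{v∈S'} f(v)`. -/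
theorem exists_layer_subset_prod_le {k : ℕ}
    (f : Fin k → Bool → ℝ≥0) (g : (Fin k → Bool) → ℝ≥0)
    (hg : ∀ x y : Fin k → Bool, g x * g y ≤ g (x ⊓ y) * g (x ⊔ y))
    (hgf : ∀ x : Fin k → Bool, g x ≤ ∏ i : Fin k, f i (zscal x i))
    (F : (Fin k → Bool) → ℝ≥0)
    (hF : ∀ x : Fin k → Bool, F x = ∏ i : Fin k, f i (x i))
    (c : ℕ) (hc : c ≤ k)
    (Vc : Finset (Fin k → Bool))
    (hVc : Vc = Finset.univ.filter
      (fun v : Fin k → Bool => (Finset.univ.filter (fun i : Fin k => v i = true)).card = c))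
    (T : ℕ) (hT1 : 1 ≤ T) (hT : T ≤ Vc.card)
    (S : Finset (Fin k → Bool)) (hS : S ⊆ Vc) (hScard : S.card = T) :
    ∃ S' : Finset (Fin k → Bool), S' ⊆ Vc ∧ S'.card = T ∧ ∏ v ∈ S, g v ≤ ∏ v ∈ S', F v := by
  classical
  set M : Multiset (Fin k → Bool) := S.val with hM
  have hMcard : M.card = T := hScard
  set D : Fin k → ℕ := fun i => colCount M i with hD
  set σ : Equiv.Perm (Fin k) := Fin.revPerm.trans (Tuple.sort D) with hσ
  set d : Fin k → ℕ := fun i => D (σ i) with hd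
  have hanti : Antitone d := by
    intro i j hij
    have h1 : Fin.rev j ≤ Fin.rev i := Fin.rev_le_rev.mpr hij
    exact Tuple.monotone_sort D h1
  have hdT : ∀ i, d i ≤ T := by
    intro i
    have h1 : d i = colCount M (σ i) := rfl
    have h2 : colCount M (σ i) ≤ M.card := Multiset.countP_le_card _ _
    omega
  -- the image set S'
  have hinj : Function.Injective (fun v : Fin k → Bool => v ∘ σ) := by
    intro v w h
    funext j
    have := congrFun h (σ.symm j)
    simpa using this
  set S' : Finset (Fin k → Bool) := S.image (fun v => v ∘ σ) with hS'
  have hwtS : ∀ v ∈ S, wt v = c := by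
    intro v hv
    have := hS hv
    rw [hVc, Finset.mem_filter] at this
    exact this.2
  have hS'sub : S' ⊆ Vc := by
    intro u hu
    rw [hS', Finset.mem_image] at hu
    obtain ⟨v, hv, rfl⟩ := hu
    rw [hVc, Finset.mem_filter]
    refine ⟨Finset.mem_univ _, ?_⟩
    have : (Finset.univ.filter (fun i : Fin k => (v ∘ σ) i = true)).card =
        (Finset.univ.filter (fun i : Fin k => v i = true)).card :=
      card_filter_perm σ (fun j => v j = true)
    rw [this]
    exact hwtS v hv
  have hS'card : S'.card = T := by
    rw [hS', Finset.card_image_of_injective S hinj, hScard]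
  refine ⟨S', hS'sub, hS'card, ?_⟩
  -- key: the i-th coordinate of the t-th order statistic, after zscal, is decided by d
  have key : ∀ (t : ℕ) (i : Fin k), (zscal (chi M t) i = true) ↔ t + 1 ≤ d i := by
    intro t i
    have hwchi : (Finset.univ.filter (fun a : Fin k => chi M t a = true)).card =
        (Finset.univ.filter (fun a : Fin k => t + 1 ≤ D a)).card := by
      apply Finset.card_bij (fun a _ => a) <;> simp [chi, hD]
    have hperm : (Finset.univ.filter (fun i' : Fin k => t + 1 ≤ d i')).card =
        (Finset.univ.filter (fun a : Fin k => t + 1 ≤ D a)).card :=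
      card_filter_perm σ (fun a => t + 1 ≤ D a)
    rw [zscal, decide_eq_true_eq, hwchi, ← hperm]
    exact antitone_count d hanti i (t + 1)
  -- counting in range T
  have hcount : ∀ i : Fin k,
      ((Finset.range T).filter (fun t => zscal (chi M t) i = true)).card = d i := by
    intro i
    have h1 : (Finset.range T).filter (fun t => zscal (chi M t) i = true) =
        Finset.range (d i) := by
      ext t
      simp only [Finset.mem_filter, Finset.mem_range, key]
      have := hdT i
      omega
    rw [h1, Finset.card_range]
  have hcountS : ∀ i : Fin k, (S.filter (fun v => v (σ i) = true)).card = d i := by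
    intro i
    have : (S.filter (fun v => v (σ i) = true)).card =
        Multiset.countP (fun v => v (σ i) = true) S.val := by
      rw [Multiset.countP_eq_card_filter]
      rfl
    rw [this]
    rfl
  -- the main chain of (in)equalities
  have step1 : ∏ v ∈ S, g v = (M.map g).prod := Finset.prod_eq_multiset_prod S g
  have step2 : (M.map g).prod ≤ ∏ t ∈ Finset.range T, g (chi M t) := by
    have := compress g hg (M.card * (k * k) + 1) M (by omega)
    rwa [hMcard] at this
  have step3 : ∏ t ∈ Finset.range T, g (chi M t) ≤
      ∏ t ∈ Finset.range T, ∏ i : Fin k, f i (zscal (chi M t) i) :=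
    Finset.prod_le_prod' fun t _ => hgf (chi M t)
  have step4 : ∏ t ∈ Finset.range T, ∏ i : Fin k, f i (zscal (chi M t) i) =
      ∏ v ∈ S', F v := by
    have hrhs : ∏ v ∈ S', F v = ∏ v ∈ S, ∏ i : Fin k, f i (v (σ i)) := by
      rw [hS', Finset.prod_image (fun x _ y _ h => hinj h)]
      exact Finset.prod_congr rfl fun v _ => by rw [hF]; rfl
    have hlhs : ∏ t ∈ Finset.range T, ∏ i : Fin k, f i (zscal (chi M t) i)
        = ∏ i : Fin k, ∏ t ∈ Finset.range T, f i (zscal (chi M t) i) := Finset.prod_comm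
    have hrhs2 : (∏ v ∈ S, ∏ i : Fin k, f i (v (σ i)))
        = ∏ i : Fin k, ∏ v ∈ S, f i (v (σ i)) := Finset.prod_comm
    rw [hlhs, hrhs, hrhs2]
    refine Finset.prod_congr rfl fun i _ => ?_
    rw [prod_count (f i) (Finset.range T) (fun t => zscal (chi M t) i),
        prod_count (f i) S (fun v => v (σ i))]
    have ht1 := Finset.card_filter_add_card_filter_not
      (s := Finset.range T) (p := fun t => zscal (chi M t) i = true)
    have ht2 := Finset.card_filter_add_card_filter_not
      (s := S) (p := fun v => v (σ i) = true)
    rw [Finset.card_range] at ht1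
    rw [hScard] at ht2
    rw [hcount i] at ht1
    rw [hcountS i] at ht2
    rw [hcount i, hcountS i]
    rw [Nat.add_left_cancel (ht1.trans ht2.symm)]
  calc ∏ v ∈ S, g v = (M.map g).prod := step1
    _ ≤ ∏ t ∈ Finset.range T, g (chi M t) := step2
    _ ≤ ∏ t ∈ Finset.range T, ∏ i : Fin k, f i (zscal (chi M t) i) := step3
    _ = ∏ v ∈ S', F v := step4
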